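/- For any reduced word u and any word v, the reduct of u·v is ⪰-larger than u; in particular every element of Γ is ⪰ the identity times it from the left. -/

import Mathlib

structure Letter (N : ℕ) where
  lo : ℕ
  hi : ℕ
  lo_le_hi : lo ≤ hi
  hi_le : hi ≤ N

namespace PS

/-- `t` is a (non-strict) subletter of `s`. -/
def Sub {N : ℕ} (t s : Letter N) : Prop := s.lo ≤ t.lo ∧ t.hi ≤ s.hi

/-- `t` is a proper subletter of `s`. -/
def PSub {N : ℕ} (t s : Letter N) : Prop := Sub t s ∧ t ≠ s

/-- Two letters commute iff they have distance at least 2. -/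
def Comm {N : ℕ} (s t : Letter N) : Prop := s.hi + 2 ≤ t.lo ∨ t.hi + 2 ≤ s.lo

abbrev Word (N : ℕ) := List (Letter N)

/-- Commutation step: swap two adjacent commuting letters. -/
def SwapStep {N : ℕ} (u v : Word N) : Prop :=
  ∃ (x y : Word N) (s t : Letter N),
    Comm s t ∧ u = x ++ s :: t :: y ∧ v = x ++ t :: s :: y

/-- Cancellation step: replace an occurrence `s·t` or `t·s` by `s`, when `t ⊆ s`. -/
def CancelStep {N : ℕ} (u v : Word N) : Prop :=
  ∃ (x y : Word N) (s t : Letter N),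
    Sub t s ∧ (u = x ++ s :: t :: y ∨ u = x ++ t :: s :: y) ∧ v = x ++ s :: y

/-- Splitting step: replace an occurrence `s·s` by a (possibly empty) product of
proper subletters of `s`. -/
def SplitStep {N : ℕ} (u v : Word N) : Prop :=
  ∃ (x y : Word N) (s : Letter N) (l : Word N),
    (∀ t ∈ l, PSub t s) ∧ u = x ++ s :: s :: y ∧ v = x ++ l ++ y

/-- Commutation-equivalence of words. -/
def WEquiv {N : ℕ} : Word N → Word N → Prop := Relation.ReflTransGen SwapStep

/-- Reduction: finitely many commutation and cancellation steps. -/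
def Red {N : ℕ} : Word N → Word N → Prop :=
  Relation.ReflTransGen (fun u v => SwapStep u v ∨ CancelStep u v)

/-- Strong reduction: also allowing splitting steps. -/
def SRed {N : ℕ} : Word N → Word N → Prop :=
  Relation.ReflTransGen (fun u v => SwapStep u v ∨ CancelStep u v ∨ SplitStep u v)

/-- The congruence defining the monoid Γ. -/
def GammaRel {N : ℕ} : Word N → Word N → Prop :=
  Relation.EqvGen (fun u v => SwapStep u v ∨ CancelStep u v)

/-- A word is reduced if there is no pair of occurrences `i ≠ j` with `sᵢ ⊆ sⱼ`
such that `sᵢ` commutes with every letter strictly between them. -/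
def Reduced {N : ℕ} (w : Word N) : Prop :=
  ¬ ∃ (x y z : Word N) (a b : Letter N),
      w = x ++ a :: (y ++ b :: z) ∧
      ((Sub a b ∧ ∀ r ∈ y, Comm a r) ∨ (Sub b a ∧ ∀ r ∈ y, Comm b r))

/-- The letter `s` is left-absorbed by the word `v`. -/
def LAbsLetter {N : ℕ} (s : Letter N) (v : Word N) : Prop :=
  ∃ (x : Word N) (t : Letter N) (y : Word N),
    v = x ++ t :: y ∧ Sub s t ∧ ∀ r ∈ x, Comm s r

/-- The letter `s` is properly left-absorbed by the word `v`. -/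
def PLAbsLetter {N : ℕ} (s : Letter N) (v : Word N) : Prop :=
  ∃ (x : Word N) (t : Letter N) (y : Word N),
    v = x ++ t :: y ∧ PSub s t ∧ ∀ r ∈ x, Comm s r

/-- The letter `s` is right-absorbed by the word `w`. -/
def RAbsLetter {N : ℕ} (s : Letter N) (w : Word N) : Prop :=
  ∃ (x : Word N) (t : Letter N) (y : Word N),
    w = x ++ t :: y ∧ Sub s t ∧ ∀ r ∈ y, Comm s r

/-- The letter `s` is properly right-absorbed by the word `w`. -/
def PRAbsLetter {N : ℕ} (s : Letter N) (w : Word N) : Prop :=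
  ∃ (x : Word N) (t : Letter N) (y : Word N),
    w = x ++ t :: y ∧ PSub s t ∧ ∀ r ∈ y, Comm s r

/-- The word `u` is left-absorbed by `v`. -/
def LAbsWord {N : ℕ} (u v : Word N) : Prop := ∀ s ∈ u, LAbsLetter s v

/-- `v` bites `u` from the right: `v` left-absorbs some letter of the final segment of `u`. -/
def BitesRight {N : ℕ} (v u : Word N) : Prop :=
  ∃ (x : Word N) (s : Letter N) (y : Word N),
    u = x ++ s :: y ∧ (∀ r ∈ y, Comm s r) ∧ LAbsLetter s v

end PS

namespace PS

/-- `Repl v u b`: `u` is obtained from `v` by keeping some letters and replacing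
others by (possibly empty) products of proper subletters; `b = true` iff at least
one replacement occurred. -/
inductive Repl {N : ℕ} : Word N → Word N → Bool → Prop
  | nil : Repl [] [] false
  | keep {v u : Word N} {b : Bool} (s : Letter N) :
      Repl v u b → Repl (s :: v) (s :: u) b
  | split {v u : Word N} {b : Bool} (s : Letter N) (l : Word N)
      (hl : ∀ t ∈ l, PSub t s) :
      Repl v u b → Repl (s :: v) (l ++ u) true

/-- `u ≺ v`: some commutation-permutation of `u` is obtained from `v` by replacing
at least one letter of `v` by a product of proper subletters. -/
def Prec {N : ℕ} (u v : Word N) : Prop :=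
  ∃ u' : Word N, WEquiv u u' ∧ Repl v u' true

/-- `u ⪯ v`. -/
def Preceq {N : ℕ} (u v : Word N) : Prop := Prec u v ∨ WEquiv u v

end PS


namespace PS

variable {N : ℕ}

/-! ### Letter lemmas -/

lemma Letter.ext' {s t : Letter N} (h1 : s.lo = t.lo) (h2 : s.hi = t.hi) : s = t := by
  cases s; cases t; simp_all

lemma Sub.refl (s : Letter N) : Sub s s := ⟨le_refl _, le_refl _⟩

lemma Sub.trans {a b c : Letter N} (h1 : Sub a b) (h2 : Sub b c) : Sub a c :=
  ⟨le_trans h2.1 h1.1, le_trans h1.2 h2.2⟩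

lemma Sub.antisymm {a b : Letter N} (h1 : Sub a b) (h2 : Sub b a) : a = b :=
  Letter.ext' (le_antisymm h2.1 h1.1) (le_antisymm h1.2 h2.2)

lemma Comm.symm' {a b : Letter N} (h : Comm a b) : Comm b a := h.elim Or.inr Or.inl

lemma comm_of_sub {c e f : Letter N} (h1 : Sub c e) (h2 : Comm e f) : Comm c f := by
  rcases h1 with ⟨hlo, hhi⟩
  rcases h2 with h | h
  · exact Or.inl (by omega)
  · exact Or.inr (by omega)

lemma psub_of_psub_sub {r t s : Letter N} (h1 : PSub r t) (h2 : Sub t s) : PSub r s := by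
  refine ⟨h1.1.trans h2, ?_⟩
  rintro rfl
  exact h1.2 (Sub.antisymm h2 h1.1).symm

/-! ### WEquiv lemmas -/

lemma SwapStep.symm' {u v : Word N} (h : SwapStep u v) : SwapStep v u := by
  obtain ⟨x, y, s, t, hc, h1, h2⟩ := h
  exact ⟨x, y, t, s, hc.symm', h2, h1⟩

lemma WEquiv.refl' (u : Word N) : WEquiv u u := Relation.ReflTransGen.refl

lemma WEquiv.symm' {u v : Word N} (h : WEquiv u v) : WEquiv v u :=
  @(@Relation.ReflTransGen.stdSymm _ _ ⟨fun _ _ => SwapStep.symm'⟩).symm _ _ h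

lemma WEquiv.trans' {u v w : Word N} (h1 : WEquiv u v) (h2 : WEquiv v w) : WEquiv u w :=
  Relation.ReflTransGen.trans h1 h2

lemma SwapStep.append_left {u v : Word N} (p : Word N) (h : SwapStep u v) :
    SwapStep (p ++ u) (p ++ v) := by
  obtain ⟨x, y, s, t, hc, h1, h2⟩ := h
  exact ⟨p ++ x, y, s, t, hc, by simp [h1], by simp [h2]⟩

lemma WEquiv.append_left {u v : Word N} (p : Word N) (h : WEquiv u v) :
    WEquiv (p ++ u) (p ++ v) :=
  Relation.ReflTransGen.lift (p ++ ·) (fun _ _ hs => SwapStep.append_left p hs) _ _ h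

lemma wequiv_cons {u v : Word N} (a : Letter N) (h : WEquiv u v) :
    WEquiv (a :: u) (a :: v) := WEquiv.append_left [a] h

/-- Move a letter to the right past a block of commuting letters. -/
lemma wequiv_move_right {a : Letter N} {l : Word N} (q : Word N)
    (hc : ∀ b ∈ l, Comm a b) : WEquiv (a :: (l ++ q)) (l ++ (a :: q)) := by
  induction l with
  | nil => exact WEquiv.refl' _
  | cons c l' ih =>
    have step : SwapStep (a :: c :: (l' ++ q)) (c :: a :: (l' ++ q)) :=
      ⟨[], l' ++ q, a, c, (hc c (by simp)).symm'.symm', rfl, rfl⟩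
    have h1 : WEquiv (a :: c :: (l' ++ q)) (c :: a :: (l' ++ q)) :=
      Relation.ReflTransGen.single step
    have h2 : WEquiv (c :: (a :: (l' ++ q))) (c :: (l' ++ (a :: q))) :=
      wequiv_cons c (ih (fun b hb => hc b (by simp [hb])))
    simpa using h1.trans' h2

/-- Swap two blocks of pairwise-commuting letters. -/
lemma wequiv_blocks {l1 l2 : Word N} (q : Word N)
    (hc : ∀ a ∈ l1, ∀ b ∈ l2, Comm a b) :
    WEquiv (l1 ++ (l2 ++ q)) (l2 ++ (l1 ++ q)) := by
  induction l1 with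
  | nil => exact WEquiv.refl' _
  | cons a l1' ih =>
    have h1 : WEquiv (a :: (l1' ++ (l2 ++ q))) (a :: (l2 ++ (l1' ++ q))) :=
      wequiv_cons a (ih (fun x hx => hc x (by simp [hx])))
    have h2 : WEquiv (a :: (l2 ++ (l1' ++ q))) (l2 ++ (a :: (l1' ++ q))) :=
      wequiv_move_right _ (fun b hb => hc a (by simp) b hb)
    simpa using h1.trans' h2

lemma wequiv_blocks' {l1 l2 : Word N} (p q : Word N)
    (hc : ∀ a ∈ l1, ∀ b ∈ l2, Comm a b) :
    WEquiv (p ++ (l1 ++ (l2 ++ q))) (p ++ (l2 ++ (l1 ++ q))) :=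
  WEquiv.append_left p (wequiv_blocks q hc)


/-! ### Index machinery for Reduced -/

/-- `getD` with a default letter. -/
def gd (w : Word N) (n : ℕ) : Letter N := w.getD n ⟨0, 0, Nat.le_refl 0, Nat.zero_le N⟩

lemma gd_append_left {w : Word N} (r : Word N) {n : ℕ} (h : n < w.length) :
    gd (w ++ r) n = gd w n := by
  induction w generalizing n with
  | nil => simp at h
  | cons a w' ih =>
    cases n with
    | zero => simp [gd]
    | succ m => simp only [gd, List.cons_append, List.getD_cons_succ] at *
                exact ih (by simpa using h)

lemma gd_append_right (w r : Word N) (n : ℕ) :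
    gd (w ++ r) (w.length + n) = gd r n := by
  induction w with
  | nil => simp [gd]
  | cons a w' ih => simpa [gd, List.getD_cons_succ, Nat.succ_add] using ih

lemma gd_mid (x y : Word N) (a : Letter N) : gd (x ++ a :: y) x.length = a := by
  have := gd_append_right x (a :: y) 0
  simp only [Nat.add_zero] at this
  rw [this]; rfl

/-- Index form of the violation pattern. -/
def VIdx (w : Word N) : Prop :=
  ∃ i j, i < j ∧ j < w.length ∧ ∃ c : Letter N,
    ((c = gd w i ∧ Sub c (gd w j)) ∨ (c = gd w j ∧ Sub c (gd w i))) ∧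
    ∀ n, i < n → n < j → Comm c (gd w n)

lemma vidx_of_not_reduced {w : Word N} (h : ¬ Reduced w) : VIdx w := by
  rw [Reduced, not_not] at h
  obtain ⟨x, y, z, a, b, hw, hcond⟩ := h
  refine ⟨x.length, x.length + (1 + y.length), by omega, ?_, ?_⟩
  · subst hw; simp; omega
  have ha : gd w x.length = a := by rw [hw]; exact gd_mid x _ a
  have hb : gd w (x.length + (1 + y.length)) = b := by
    have heq : w = (x ++ a :: y) ++ b :: z := by rw [hw]; simp
    have hlen : (x ++ a :: y).length = x.length + (1 + y.length) := by simp; omega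
    rw [heq, ← hlen]
    exact gd_mid (x ++ a :: y) z b
  have hmem : ∀ n, x.length < n → n < x.length + (1 + y.length) → gd w n ∈ y := by
    intro n h1 h2
    obtain ⟨p, rfl⟩ : ∃ p, n = x.length + (1 + p) := ⟨n - x.length - 1, by omega⟩
    have hp : p < y.length := by omega
    rw [hw, gd_append_right x (a :: (y ++ b :: z)) (1 + p)]
    have : gd (a :: (y ++ b :: z)) (1 + p) = gd (y ++ b :: z) p := by
      rw [Nat.add_comm]; simp [gd, List.getD_cons_succ]
    rw [this, gd_append_left _ hp]
    simp only [gd, List.getD_eq_getElem y _ hp]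
    exact List.getElem_mem hp
  rcases hcond with ⟨hsub, hcomm⟩ | ⟨hsub, hcomm⟩
  · exact ⟨a, Or.inl ⟨ha.symm, by rw [hb]; exact hsub⟩,
      fun n h1 h2 => hcomm _ (hmem n h1 h2)⟩
  · exact ⟨b, Or.inr ⟨hb.symm, by rw [ha]; exact hsub⟩,
      fun n h1 h2 => hcomm _ (hmem n h1 h2)⟩

lemma not_reduced_of_vidx {w : Word N} (h : VIdx w) : ¬ Reduced w := by
  obtain ⟨i, j, hij, hj, c, hc, hcomm⟩ := h
  rw [Reduced, not_not]
  have hi : i < w.length := lt_trans hij hj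
  have hdrop1 : w.drop i = w[i] :: w.drop (i + 1) := List.drop_eq_getElem_cons hi
  have hdropj : w.drop j = w[j] :: w.drop (j + 1) := List.drop_eq_getElem_cons hj
  refine ⟨w.take i, (w.drop (i+1)).take (j - i - 1), w.drop (j+1), w[i], w[j], ?_, ?_⟩
  · have h1 : w = w.take i ++ w[i] :: w.drop (i + 1) := by
      rw [← hdrop1, List.take_append_drop]
    have h2 : w.drop (i+1) = (w.drop (i+1)).take (j - i - 1) ++ w[j] :: w.drop (j+1) := by
      have h3 : (w.drop (i+1)).drop (j - i - 1) = w.drop j := by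
        rw [List.drop_drop]; congr 1; omega
      conv_lhs => rw [← List.take_append_drop (j - i - 1) (w.drop (i+1))]
      rw [h3, hdropj]
    conv_lhs => rw [h1]
    rw [← h2]
  · have hmem : ∀ r ∈ (w.drop (i+1)).take (j - i - 1), Comm c r := by
      intro r hr
      obtain ⟨p, hp, rfl⟩ := List.mem_iff_getElem.mp hr
      have hlen : p < j - i - 1 := by
        have := hp; simp [List.length_take, List.length_drop] at this; omega
      have hlt : i + 1 + p < w.length := by
        have := hp; simp [List.length_take, List.length_drop] at this; omega
      have : ((w.drop (i+1)).take (j - i - 1))[p] = w[i + 1 + p] := by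
        rw [List.getElem_take, List.getElem_drop]
      rw [this]
      have := hcomm (i + 1 + p) (by omega) (by omega)
      rwa [gd, List.getD_eq_getElem w _ hlt] at this
    have hgi : gd w i = w[i] := List.getD_eq_getElem w _ hi
    have hgj : gd w j = w[j] := List.getD_eq_getElem w _ hj
    rcases hc with ⟨rfl, hsub⟩ | ⟨rfl, hsub⟩
    · exact Or.inl ⟨by rw [← hgi, ← hgj]; exact hsub, by rw [hgi] at hmem; exact hmem⟩
    · exact Or.inr ⟨by rw [← hgi, ← hgj]; exact hsub, by rw [hgj] at hmem; exact hmem⟩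


lemma vidx_swap {w w' : Word N} (h : SwapStep w w') (hv : VIdx w) : VIdx w' := by
  obtain ⟨x, y, s, t, hct, rfl, rfl⟩ := h
  obtain ⟨i, j, hij, hj, c, hc, hcomm⟩ := hv
  have hlenw : (x ++ s :: t :: y).length = x.length + 2 + y.length := by simp; omega
  have hlenw' : (x ++ t :: s :: y).length = x.length + 2 + y.length := by simp; omega
  rw [hlenw] at hj
  have gwk : gd (x ++ s :: t :: y) x.length = s := gd_mid x _ s
  have gwk1 : gd (x ++ s :: t :: y) (x.length + 1) = t := by
    simpa [gd] using gd_append_right x (s :: t :: y) 1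
  have gw'k : gd (x ++ t :: s :: y) x.length = t := gd_mid x _ t
  have gw'k1 : gd (x ++ t :: s :: y) (x.length + 1) = s := by
    simpa [gd] using gd_append_right x (t :: s :: y) 1
  have geq : ∀ n, n ≠ x.length → n ≠ x.length + 1 →
      gd (x ++ t :: s :: y) n = gd (x ++ s :: t :: y) n := by
    intro n h1 h2
    rcases lt_or_ge n x.length with h | h
    · rw [gd_append_left _ h, gd_append_left _ h]
    · obtain ⟨p, rfl⟩ : ∃ p, n = x.length + (p + 2) := ⟨n - x.length - 2, by omega⟩
      rw [gd_append_right x (t :: s :: y) (p + 2), gd_append_right x (s :: t :: y) (p + 2)]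
      simp [gd]
  by_cases hspec : i = x.length ∧ j = x.length + 1
  · obtain ⟨rfl, rfl⟩ := hspec
    refine ⟨x.length, x.length + 1, by omega, by rw [hlenw']; omega, c, ?_,
      fun n h1 h2 => by omega⟩
    rw [gwk, gwk1] at hc
    rw [gw'k, gw'k1]
    exact hc.symm
  · -- general case
    by_cases hik : i = x.length
    · -- S1 : i = k, j > k + 1
      have hjne : j ≠ x.length + 1 := fun hh => hspec ⟨hik, hh⟩
      have hjk : x.length + 1 < j := by omega
      refine ⟨x.length + 1, j, by omega, by rw [hlenw']; omega, c, ?_, ?_⟩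
      · rw [gw'k1, geq j (by omega) (by omega)]
        rw [hik, gwk] at hc
        exact hc
      · intro n h1 h2
        rw [geq n (by omega) (by omega)]
        exact hcomm n (by omega) h2
    by_cases hik1 : i = x.length + 1
    · -- S2 : i = k + 1
      refine ⟨x.length, j, by omega, by rw [hlenw']; omega, c, ?_, ?_⟩
      · rw [gw'k, geq j (by omega) (by omega)]
        rw [hik1, gwk1] at hc
        exact hc
      · intro n h1 h2
        by_cases hn : n = x.length + 1
        · subst hn
          rw [gw'k1]
          rw [hik1, gwk1] at hc
          have hct' : Comm t s := hct.symm'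
          rcases hc with ⟨rfl, _⟩ | ⟨_, hsub⟩
          · exact hct'
          · exact comm_of_sub hsub hct'
        · rw [geq n (by omega) hn]
          exact hcomm n (by omega) h2
    by_cases hjk : j = x.length
    · -- S3 : j = k, i < k
      refine ⟨i, x.length + 1, by omega, by rw [hlenw']; omega, c, ?_, ?_⟩
      · rw [gw'k1, geq i (by omega) (by omega)]
        rw [hjk, gwk] at hc
        exact hc
      · intro n h1 h2
        by_cases hn : n = x.length
        · subst hn
          rw [gw'k]
          rw [hjk, gwk] at hc
          rcases hc with ⟨_, hsub⟩ | ⟨rfl, _⟩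
          · exact comm_of_sub hsub hct
          · exact hct
        · rw [geq n hn (by omega)]
          exact hcomm n h1 (by omega)
    by_cases hjk1 : j = x.length + 1
    · -- S4 : j = k + 1, i < k
      have hi : i < x.length := by omega
      refine ⟨i, x.length, by omega, by rw [hlenw']; omega, c, ?_, ?_⟩
      · rw [gw'k, geq i (by omega) (by omega)]
        rw [hjk1, gwk1] at hc
        exact hc
      · intro n h1 h2
        rw [geq n (by omega) (by omega)]
        exact hcomm n h1 (by omega)
    · -- S5 : i, j ∉ {k, k+1}
      refine ⟨i, j, hij, by rw [hlenw']; omega, c, ?_, ?_⟩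
      · rw [geq i hik hik1, geq j hjk hjk1]
        exact hc
      · intro n h1 h2
        by_cases hn : n = x.length
        · subst hn
          rw [gw'k, ← gwk1]
          exact hcomm _ (by omega) (by omega)
        by_cases hn1 : n = x.length + 1
        · subst hn1
          rw [gw'k1, ← gwk]
          exact hcomm _ (by omega) (by omega)
        · rw [geq n hn hn1]
          exact hcomm n h1 h2

lemma reduced_of_wequiv {u u' : Word N} (h : WEquiv u u') (hu : Reduced u) : Reduced u' := by
  induction h with
  | refl => exact hu
  | tail _ hstep ih =>
    by_contra hv
    exact not_reduced_of_vidx (vidx_swap hstep.symm' (vidx_of_not_reduced hv)) ih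


/-! ### Repl machinery -/

lemma Repl.self (w : Word N) : Repl w w false := by
  induction w with
  | nil => exact Repl.nil
  | cons a w' ih => exact Repl.keep a ih

lemma repl_eq_of_false {v u : Word N} {b : Bool} (h : Repl v u b) (hb : b = false) :
    u = v := by
  induction h with
  | nil => rfl
  | keep s _ ih => rw [ih hb]
  | split s l hl _ ih => simp at hb

lemma repl_exists_nil (v : Word N) : ∃ b, Repl v [] b := by
  induction v with
  | nil => exact ⟨false, Repl.nil⟩
  | cons s v' ih =>
    obtain ⟨b, h⟩ := ih
    exact ⟨true, Repl.split s [] (by simp) h⟩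

lemma repl_append {x y ux uy : Word N} {bx by' : Bool}
    (hx : Repl x ux bx) (hy : Repl y uy by') :
    Repl (x ++ y) (ux ++ uy) (bx || by') := by
  induction hx with
  | nil => simpa using hy
  | keep s _ ih => exact Repl.keep s ih
  | split s l hl _ ih =>
    rw [List.cons_append, List.append_assoc]
    exact Repl.split s l hl ih

lemma repl_append_inv {x y u : Word N} {b : Bool} (h : Repl (x ++ y) u b) :
    ∃ ux uy bx by', u = ux ++ uy ∧ b = (bx || by') ∧ Repl x ux bx ∧ Repl y uy by' := by
  induction x generalizing u b with
  | nil => exact ⟨[], u, false, b, rfl, rfl, Repl.nil, h⟩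
  | cons a x' ih =>
    cases h with
    | keep _ h' =>
      obtain ⟨ux, uy, bx, by', rfl, rfl, hx, hy⟩ := ih h'
      exact ⟨a :: ux, uy, bx, by', rfl, rfl, Repl.keep a hx, hy⟩
    | split _ l hl h' =>
      obtain ⟨ux, uy, bx, by', rfl, rfl, hx, hy⟩ := ih h'
      exact ⟨l ++ ux, uy, true, by', by simp, by simp, Repl.split a l hl hx, hy⟩

lemma repl_two_inv {s t : Letter N} {y u1 : Word N} {b1 : Bool}
    (h : Repl (s :: t :: y) u1 b1) :
    ∃ As At u3, u1 = As ++ (At ++ u3) ∧ (∀ r ∈ As, Sub r s) ∧ (∀ r ∈ At, Sub r t) ∧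
      Repl (t :: s :: y) (At ++ (As ++ u3)) b1 := by
  cases h with
  | keep _ h2 =>
    cases h2 with
    | keep _ h3 =>
      exact ⟨[s], [t], _, rfl, by simp [Sub.refl], by simp [Sub.refl],
        Repl.keep t (Repl.keep s h3)⟩
    | split _ lt hlt h3 =>
      exact ⟨[s], lt, _, rfl, by simp [Sub.refl], fun r hr => (hlt r hr).1,
        Repl.split t lt hlt (Repl.keep s h3)⟩
  | split _ ls hls h2 =>
    cases h2 with
    | keep _ h3 =>
      exact ⟨ls, [t], _, by simp, fun r hr => (hls r hr).1, by simp [Sub.refl],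
        Repl.keep t (Repl.split s ls hls h3)⟩
    | split _ lt hlt h3 =>
      exact ⟨ls, lt, _, rfl, fun r hr => (hls r hr).1, fun r hr => (hlt r hr).1,
        Repl.split t lt hlt (Repl.split s ls hls h3)⟩

/-! ### Step preservation -/

lemma step_preserve {u z z' : Word N} (hu : Reduced u)
    (hstep : SwapStep z z' ∨ CancelStep z z')
    (h : ∃ u' b, WEquiv u u' ∧ Repl z u' b) :
    ∃ u' b, WEquiv u u' ∧ Repl z' u' b := by
  obtain ⟨u', b, he, hr⟩ := h
  have hu' : Reduced u' := reduced_of_wequiv he hu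
  rcases hstep with hsw | hca
  · -- swap step
    obtain ⟨x, y, s, t, hct, rfl, rfl⟩ := hsw
    obtain ⟨rx, u1, bx, b1, rfl, rfl, hx, h1⟩ := repl_append_inv hr
    obtain ⟨As, At, u3, rfl, hAs, hAt, hrec⟩ := repl_two_inv h1
    refine ⟨rx ++ (At ++ (As ++ u3)), bx || b1, ?_, repl_append hx hrec⟩
    refine he.trans' (wequiv_blocks' rx u3 ?_)
    intro a ha b hb
    have h1 : Comm a t := comm_of_sub (hAs a ha) hct
    exact (comm_of_sub (hAt b hb) h1.symm').symm'
  · -- cancel step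
    obtain ⟨x, y, s, t, hsub, hor, rfl⟩ := hca
    rcases hor with rfl | rfl
    · -- z = x ++ s :: t :: y
      obtain ⟨rx, u1, bx, b1, rfl, rfl, hx, h1⟩ := repl_append_inv hr
      cases h1 with
      | @keep _ u2 _ _ h2 =>
        cases h2 with
        | @keep _ u3 _ _ h3 =>
          exact absurd ⟨rx, [], u3, s, t, by simp, Or.inr ⟨hsub, by simp⟩⟩ hu'
        | @split _ u3 _ _ lt hlt h3 =>
          rcases lt with _ | ⟨c, lt'⟩
          · exact ⟨rx ++ (s :: u3), _, by simpa using he,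
              repl_append hx (Repl.keep s h3)⟩
          · exact absurd ⟨rx, [], lt' ++ u3, s, c, by simp,
              Or.inr ⟨Sub.trans (hlt c (by simp)).1 hsub, by simp⟩⟩ hu'
      | @split _ u2 _ _ ls hls h2 =>
        cases h2 with
        | @keep _ u3 _ _ h3 =>
          by_cases hts : t = s
          · subst hts
            rcases eq_or_ne ls [] with rfl | hne
            · exact ⟨rx ++ (t :: u3), _, by simpa using he,
                repl_append hx (Repl.keep t h3)⟩
            · refine absurd ⟨rx ++ ls.dropLast, [], u3, ls.getLast hne, t, ?_,
                Or.inl ⟨(hls _ (List.getLast_mem hne)).1, by simp⟩⟩ hu'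
              conv_lhs => rw [← List.dropLast_append_getLast hne]
              simp
          · refine ⟨rx ++ ((ls ++ [t]) ++ u3), _, by simpa using he,
              repl_append hx (Repl.split s (ls ++ [t]) ?_ h3)⟩
            intro r hr
            rcases List.mem_append.mp hr with hr | hr
            · exact hls r hr
            · simp at hr; subst hr; exact ⟨hsub, hts⟩
        | @split _ u3 _ _ lt hlt h3 =>
          refine ⟨rx ++ ((ls ++ lt) ++ u3), _, by simpa using he,
            repl_append hx (Repl.split s (ls ++ lt) ?_ h3)⟩
          intro r hr
          rcases List.mem_append.mp hr with hr | hr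
          · exact hls r hr
          · exact psub_of_psub_sub (hlt r hr) hsub
    · -- z = x ++ t :: s :: y
      obtain ⟨rx, u1, bx, b1, rfl, rfl, hx, h1⟩ := repl_append_inv hr
      cases h1 with
      | @keep _ u2 _ _ h2 =>
        cases h2 with
        | @keep _ u3 _ _ h3 =>
          exact absurd ⟨rx, [], u3, t, s, by simp, Or.inl ⟨hsub, by simp⟩⟩ hu'
        | @split _ u3 _ _ ls hls h3 =>
          by_cases hts : t = s
          · subst hts
            rcases ls with _ | ⟨c, ls'⟩
            · exact ⟨rx ++ (t :: u3), _, by simpa using he,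
                repl_append hx (Repl.keep t h3)⟩
            · exact absurd ⟨rx, [], ls' ++ u3, t, c, by simp,
                Or.inr ⟨(hls c (by simp)).1, by simp⟩⟩ hu'
          · refine ⟨rx ++ ((t :: ls) ++ u3), _, by simpa using he,
              repl_append hx (Repl.split s (t :: ls) ?_ h3)⟩
            intro r hr
            rcases List.mem_cons.mp hr with rfl | hr
            · exact ⟨hsub, hts⟩
            · exact hls r hr
      | @split _ u2 _ _ lt hlt h2 =>
        cases h2 with
        | @keep _ u3 _ _ h3 =>
          rcases eq_or_ne lt [] with rfl | hne
          · exact ⟨rx ++ (s :: u3), _, by simpa using he,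
              repl_append hx (Repl.keep s h3)⟩
          · refine absurd ⟨rx ++ lt.dropLast, [], u3, lt.getLast hne, s, ?_,
              Or.inl ⟨Sub.trans (hlt _ (List.getLast_mem hne)).1 hsub, by simp⟩⟩ hu'
            conv_lhs => rw [← List.dropLast_append_getLast hne]
            simp
        | @split _ u3 _ _ ls hls h3 =>
          refine ⟨rx ++ ((lt ++ ls) ++ u3), _, by simpa using he,
            repl_append hx (Repl.split s (lt ++ ls) ?_ h3)⟩
          intro r hr
          rcases List.mem_append.mp hr with hr | hr
          · exact psub_of_psub_sub (hlt r hr) hsub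
          · exact hls r hr

end PS

open PS in
/-- For reduced `u` and any `v`, the reduct of `u·v` is `⪰`-larger than `u`. -/
theorem self_preceq_reduct_of_append {N : ℕ} (u v w : Word N)
    (hu : Reduced u) (hred : Red (u ++ v) w) (hw : Reduced w) :
    Preceq u w := by
  have hinv : ∀ z₁ z₂ : Word N, Red z₁ z₂ →
      (∃ u' b, WEquiv u u' ∧ Repl z₁ u' b) → ∃ u' b, WEquiv u u' ∧ Repl z₂ u' b := by
    intro z₁ z₂ hred
    induction hred with
    | refl => exact id
    | tail _ hstep ih => exact fun h => step_preserve hu hstep (ih h)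
  obtain ⟨bv, hbv⟩ := repl_exists_nil v
  have hinit : ∃ u' b, WEquiv u u' ∧ Repl (u ++ v) u' b :=
    ⟨u ++ [], false || bv, by simpa using WEquiv.refl' u, repl_append (Repl.self u) hbv⟩
  obtain ⟨u', b, he, hr⟩ := hinv _ _ hred hinit
  cases b with
  | false => exact Or.inr (repl_eq_of_false hr rfl ▸ he)
  | true => exact Or.inl ⟨u', he, hr⟩
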